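/- Let F be a p-adic field of odd residual characteristic, ψ a normalized nontrivial additive character, and χ a character of F* with odd conductor m ≥ 3. Then there exists a unique b ∈ O/P such that for all x ∈ 1+P^{(m-1)/2}: χ(x) = ψ(2⁻¹ c ϖ^{-m}((x-1)² - 2(x-1))) · ψ(c·b·ϖ^{-(m+1)/2}(x-1)), where c = c_{χ,ψ}. -/

import Mathlib

set_option maxHeartbeats 1000000
set_option synthInstance.maxHeartbeats 200000


/-- Let `F` be a p-adic field of odd residual characteristic, `ψ` a normalized
nontrivial additive character, and `χ` a character of `Fˣ` with odd conductor
`m ≥ 3`, `c = c_{χ,ψ}`. Then there exists `b ∈ O`, unique modulo `P`, such that for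
all `x ∈ 1 + P^{(m-1)/2}`:
`χ(x) = ψ(2⁻¹cϖ^{-m}((x-1)² - 2(x-1))) · ψ(c·b·ϖ^{-(m+1)/2}(x-1))`. -/
theorem stmt_16 {p : ℕ} [Fact p.Prime] (hp : p ≠ 2) {F : Type*} [Field F]
    [Algebra ℚ_[p] F] [FiniteDimensional ℚ_[p] F]
    (O : Subring F) (ϖ : F)
    (hϖO : ϖ ∈ O) (hϖ0 : ϖ ≠ 0) (hϖnu : ϖ⁻¹ ∉ O)
    (hϖgen : ∀ x : F, x ∈ O → x⁻¹ ∉ O → x * ϖ⁻¹ ∈ O)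
    (hval : ∀ x : F, x ≠ 0 → ∃ n : ℤ, x * (ϖ ^ n)⁻¹ ∈ O ∧ (x * (ϖ ^ n)⁻¹)⁻¹ ∈ O)
    (hfin : Finite (O ⧸ Ideal.span {(⟨ϖ, hϖO⟩ : O)}))
    (h2 : (2 : F)⁻¹ ∈ O)
    (ψ : AddChar F ℂ)
    (hψO : ∀ x : F, x ∈ O → ψ x = 1)
    (hψnt : ∃ x : F, ϖ * x ∈ O ∧ ψ x ≠ 1)
    (m : ℕ) (hm : Odd m) (hm3 : 3 ≤ m)
    (χ : F →* ℂ)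
    (hχ : ∀ x : F, (x - 1) * (ϖ ^ m)⁻¹ ∈ O → χ x = 1)
    (hχ' : ∃ x : F, (x - 1) * (ϖ ^ (m - 1))⁻¹ ∈ O ∧ χ x ≠ 1)
    (c : F) (hcO : c ∈ O) (hcu : c⁻¹ ∈ O)
    (hc : ∀ x : F, (x - 1) * (ϖ ^ ((m + 1) / 2))⁻¹ ∈ O →
      ψ (c * (x - 1) * (ϖ ^ m)⁻¹) = (χ x)⁻¹) :
    ∃ b : F, b ∈ O ∧
      (∀ x : F, (x - 1) * (ϖ ^ ((m - 1) / 2))⁻¹ ∈ O →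
        χ x = ψ ((2 : F)⁻¹ * c * ((x - 1) ^ 2 - 2 * (x - 1)) * (ϖ ^ m)⁻¹) *
          ψ (c * b * (x - 1) * (ϖ ^ ((m + 1) / 2))⁻¹)) ∧
      (∀ b' : F, b' ∈ O →
        (∀ x : F, (x - 1) * (ϖ ^ ((m - 1) / 2))⁻¹ ∈ O →
          χ x = ψ ((2 : F)⁻¹ * c * ((x - 1) ^ 2 - 2 * (x - 1)) * (ϖ ^ m)⁻¹) *
            ψ (c * b' * (x - 1) * (ϖ ^ ((m + 1) / 2))⁻¹)) →
        (b - b') * ϖ⁻¹ ∈ O) := by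
  classical
  have hchar : CharZero F := charZero_of_injective_algebraMap (algebraMap ℚ_[p] F).injective
  have hF2 : (2 : F) ≠ 0 := two_ne_zero
  obtain ⟨k, hk⟩ := hm
  have hk1 : 1 ≤ k := by omega
  have hm1 : (m - 1) / 2 = k := by omega
  have hm2 : (m + 1) / 2 = k + 1 := by omega
  have hm4 : m - 1 = 2 * k := by omega
  rw [hm1, hm2]
  rw [hm2] at hc
  rw [hm4] at hχ'
  -- basic valuation tools
  have hpne : ∀ n : ℕ, (ϖ : F) ^ n ≠ 0 := fun n => pow_ne_zero n hϖ0
  have hmulO : ∀ (j l : ℕ) (u v : F), u * (ϖ ^ j)⁻¹ ∈ O → v * (ϖ ^ l)⁻¹ ∈ O →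
      (u * v) * (ϖ ^ (j + l))⁻¹ ∈ O := by
    intro j l u v hu hv
    have h : (u * v) * (ϖ ^ (j + l))⁻¹ = (u * (ϖ ^ j)⁻¹) * (v * (ϖ ^ l)⁻¹) := by
      rw [pow_add]; field_simp
    rw [h]; exact O.mul_mem hu hv
  have hdown : ∀ (n j : ℕ) (u : F), j ≤ n → u * (ϖ ^ n)⁻¹ ∈ O → u * (ϖ ^ j)⁻¹ ∈ O := by
    intro n j u hjn hu
    have hnn : (ϖ : F) ^ n = ϖ ^ j * ϖ ^ (n - j) := by rw [← pow_add]; congr 1; omega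
    have h : u * (ϖ ^ j)⁻¹ = (u * (ϖ ^ n)⁻¹) * ϖ ^ (n - j) := by
      rw [hnn]; field_simp
    rw [h]; exact O.mul_mem hu (pow_mem hϖO _)
  have hconst : ∀ (n : ℕ) (u v : F), u ∈ O → v * (ϖ ^ n)⁻¹ ∈ O → (u * v) * (ϖ ^ n)⁻¹ ∈ O := by
    intro n u v hu hv
    rw [mul_assoc]; exact O.mul_mem hu hv
  have hinO : ∀ (n : ℕ) (u : F), u * (ϖ ^ n)⁻¹ ∈ O → u ∈ O := by
    intro n u hu
    have := hdown n 0 u (Nat.zero_le n) hu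
    simpa using this
  -- ψ facts
  have hψne : ∀ x : F, ψ x ≠ 0 := by
    intro x h
    have h1 : ψ x * ψ (-x) = 1 := by
      rw [← ψ.map_add_eq_mul]; simp
    rw [h, zero_mul] at h1
    exact one_ne_zero h1.symm
  have hψsub : ∀ x y : F, ψ x = ψ y → ψ (x - y) = 1 := by
    intro x y h
    have h1 : ψ (x - y) * ψ y = ψ x := by
      rw [← ψ.map_add_eq_mul]; congr 1; ring
    rw [h] at h1
    exact mul_right_cancel₀ (hψne y) (h1.trans (one_mul (ψ y)).symm)
  have hψcong : ∀ x y : F, x - y ∈ O → ψ x = ψ y := by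
    intro x y h
    have h1 : ψ x = ψ (y + (x - y)) := by congr 1; ring
    rw [h1, ψ.map_add_eq_mul, hψO _ h, mul_one]
  -- χ facts
  have hχne : ∀ x : F, x ≠ 0 → χ x ≠ 0 := by
    intro x hx h
    have h1 : χ x * χ x⁻¹ = 1 := by rw [← map_mul, mul_inv_cancel₀ hx, map_one]
    rw [h, zero_mul] at h1
    exact one_ne_zero h1.symm
  -- units
  have hunit : ∀ d : F, d ∈ O → d * ϖ⁻¹ ∉ O → d⁻¹ ∈ O := by
    intro d hd h
    by_contra h'
    exact h (hϖgen d hd h')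
  have honeP : (1 : F) * ϖ⁻¹ ∉ O := by simpa using hϖnu
  have hmemP : ∀ u : F, u * ϖ⁻¹ ∈ O → u ∈ O := by
    intro u hu
    have h' : u = (u * ϖ⁻¹) * ϖ := by field_simp
    rw [h']; exact O.mul_mem hu hϖO
  have hP1 : ∀ u : F, u * ϖ⁻¹ ∈ O → ((1 : F) + u ≠ 0 ∧ ((1 : F) + u)⁻¹ ∈ O) := by
    intro u hu
    have hne : (1 : F) + u ≠ 0 := by
      intro h
      have hu1 : u = -1 := by linear_combination h
      apply honeP
      rw [hu1] at hu
      have := O.neg_mem hu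
      simpa using this
    refine ⟨hne, ?_⟩
    apply hunit
    · exact O.add_mem O.one_mem (hmemP u hu)
    · intro h
      apply honeP
      have h1 : (1 : F) * ϖ⁻¹ = ((1 : F) + u) * ϖ⁻¹ - u * ϖ⁻¹ := by ring
      rw [h1]; exact O.sub_mem h hu
  -- c ≠ 0
  have h21 : (2 : F)⁻¹ * 2 = 1 := inv_mul_cancel₀ hF2
  have hc0 : c ≠ 0 := by
    intro h
    obtain ⟨x, hx1, hx2⟩ := hχ'
    have hx' : (x - 1) * (ϖ ^ (k + 1))⁻¹ ∈ O := hdown (2 * k) (k + 1) _ (by omega) hx1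
    have h1 := hc x hx'
    rw [h, zero_mul, zero_mul, ψ.map_zero_eq_one] at h1
    exact hx2 (by rw [← inv_inv (χ x), ← h1, inv_one])
  -- the auxiliary character η
  set η : F → ℂ := fun w => χ (1 + w) *
    ψ (c * w * (ϖ ^ m)⁻¹ - (2 : F)⁻¹ * c * w ^ 2 * (ϖ ^ m)⁻¹) with hηdef
  -- η is trivial on P^(k+1)
  have hηB : ∀ u : F, u * (ϖ ^ (k + 1))⁻¹ ∈ O → η u = 1 := by
    intro u hu
    have hu1 : u * ϖ⁻¹ ∈ O := by
      have := hdown (k + 1) 1 u (by omega) hu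
      rwa [pow_one] at this
    have hne : (1 : F) + u ≠ 0 := (hP1 u hu1).1
    have hA : ψ (c * u * (ϖ ^ m)⁻¹) = (χ (1 + u))⁻¹ := by
      have h' : ((1 : F) + u) - 1 = u := by ring
      have := hc (1 + u) (by rw [h']; exact hu)
      rwa [h'] at this
    have hBmem : (2 : F)⁻¹ * c * u ^ 2 * (ϖ ^ m)⁻¹ ∈ O := by
      have hq1 : (u * u) * (ϖ ^ ((k + 1) + (k + 1)))⁻¹ ∈ O := hmulO (k + 1) (k + 1) u u hu hu
      have hq2 : (u * u) * (ϖ ^ m)⁻¹ ∈ O := hdown ((k + 1) + (k + 1)) m _ (by omega) hq1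
      have hq3 : (((2 : F)⁻¹ * c) * (u * u)) * (ϖ ^ m)⁻¹ ∈ O :=
        hconst m _ _ (O.mul_mem h2 hcO) hq2
      have hq4 : (2 : F)⁻¹ * c * u ^ 2 * (ϖ ^ m)⁻¹ = (((2 : F)⁻¹ * c) * (u * u)) * (ϖ ^ m)⁻¹ := by
        ring
      rw [hq4]; exact hq3
    have hsplit : ψ (c * u * (ϖ ^ m)⁻¹ - (2 : F)⁻¹ * c * u ^ 2 * (ϖ ^ m)⁻¹)
        = ψ (c * u * (ϖ ^ m)⁻¹) := by
      apply hψcong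
      have h5 : (c * u * (ϖ ^ m)⁻¹ - (2 : F)⁻¹ * c * u ^ 2 * (ϖ ^ m)⁻¹) - c * u * (ϖ ^ m)⁻¹
          = -((2 : F)⁻¹ * c * u ^ 2 * (ϖ ^ m)⁻¹) := by ring
      rw [h5]; exact O.neg_mem hBmem
    simp only [hηdef]
    rw [hsplit, hA, mul_inv_cancel₀ (hχne _ hne)]
  -- η is additive on P^k
  have hA : ∀ u v : F, u * (ϖ ^ k)⁻¹ ∈ O → v * (ϖ ^ k)⁻¹ ∈ O → η (u + v) = η u * η v := by
    intro u v hu hv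
    have hu1 : u * ϖ⁻¹ ∈ O := by
      have := hdown k 1 u hk1 hu; rwa [pow_one] at this
    have hv1 : v * ϖ⁻¹ ∈ O := by
      have := hdown k 1 v hk1 hv; rwa [pow_one] at this
    have huv1 : (u + v) * ϖ⁻¹ ∈ O := by
      have h : (u + v) * ϖ⁻¹ = u * ϖ⁻¹ + v * ϖ⁻¹ := by ring
      rw [h]; exact O.add_mem hu1 hv1
    have huvk : (u + v) * (ϖ ^ k)⁻¹ ∈ O := by
      have h : (u + v) * (ϖ ^ k)⁻¹ = u * (ϖ ^ k)⁻¹ + v * (ϖ ^ k)⁻¹ := by ring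
      rw [h]; exact O.add_mem hu hv
    obtain ⟨hsne, hsinv⟩ := hP1 (u + v) huv1
    have huvkk : (u * v) * (ϖ ^ (k + k))⁻¹ ∈ O := hmulO k k u v hu hv
    have htk : (u * v * ((1 : F) + (u + v))⁻¹) * (ϖ ^ (k + 1))⁻¹ ∈ O := by
      have h1 : (u * v) * (ϖ ^ (k + 1))⁻¹ ∈ O := hdown (k + k) (k + 1) _ (by omega) huvkk
      have h2 : (u * v * ((1 : F) + (u + v))⁻¹) * (ϖ ^ (k + 1))⁻¹
          = ((1 : F) + (u + v))⁻¹ * ((u * v) * (ϖ ^ (k + 1))⁻¹) := by ring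
      rw [h2]; exact O.mul_mem hsinv h1
    have hχt : (χ (1 + u * v * ((1 : F) + (u + v))⁻¹))⁻¹
        = ψ (c * (u * v * ((1 : F) + (u + v))⁻¹) * (ϖ ^ m)⁻¹) := by
      have h' : ((1 : F) + u * v * ((1 : F) + (u + v))⁻¹) - 1
          = u * v * ((1 : F) + (u + v))⁻¹ := by ring
      have h := hc (1 + u * v * ((1 : F) + (u + v))⁻¹) (by rw [h']; exact htk)
      rw [h'] at h
      exact h.symm
    have hψt : ψ (c * (u * v * ((1 : F) + (u + v))⁻¹) * (ϖ ^ m)⁻¹)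
        = ψ (c * (u * v) * (ϖ ^ m)⁻¹) := by
      apply hψcong
      have h1 : ((u * v) * (u + v)) * (ϖ ^ (k + k + k))⁻¹ ∈ O := hmulO (k + k) k _ _ huvkk huvk
      have h2 : ((u * v) * (u + v)) * (ϖ ^ m)⁻¹ ∈ O := hdown (k + k + k) m _ (by omega) h1
      have h3 : c * (u * v * ((1 : F) + (u + v))⁻¹) * (ϖ ^ m)⁻¹ - c * (u * v) * (ϖ ^ m)⁻¹
          = -((c * ((1 : F) + (u + v))⁻¹) * (((u * v) * (u + v)) * (ϖ ^ m)⁻¹)) := by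
        field_simp
        ring
      rw [h3]
      exact O.neg_mem (O.mul_mem (O.mul_mem hcO hsinv) h2)
    have ht1 : (u * v * ((1 : F) + (u + v))⁻¹) * ϖ⁻¹ ∈ O := by
      have := hdown (k + 1) 1 _ (by omega) htk
      rwa [pow_one] at this
    have htne : (1 : F) + u * v * ((1 : F) + (u + v))⁻¹ ≠ 0 := (hP1 _ ht1).1
    have hfact : ((1 : F) + u) * ((1 : F) + v)
        = ((1 : F) + (u + v)) * ((1 : F) + u * v * ((1 : F) + (u + v))⁻¹) := by
      field_simp
      ring
    have hχs : χ ((1 : F) + (u + v))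
        = χ ((1 : F) + u) * χ ((1 : F) + v) * ψ (c * (u * v) * (ϖ ^ m)⁻¹) := by
      have h1 : χ ((1 : F) + u) * χ ((1 : F) + v)
          = χ ((1 : F) + (u + v)) * χ ((1 : F) + u * v * ((1 : F) + (u + v))⁻¹) := by
        rw [← map_mul, ← map_mul, hfact]
      rw [h1, ← hψt, ← hχt]
      rw [mul_assoc, mul_inv_cancel₀ (hχne _ htne), mul_one]
    calc η (u + v) = χ ((1 : F) + (u + v)) *
        ψ (c * (u + v) * (ϖ ^ m)⁻¹ - (2 : F)⁻¹ * c * (u + v) ^ 2 * (ϖ ^ m)⁻¹) := by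
          simp only [hηdef]
      _ = χ ((1 : F) + u) * χ ((1 : F) + v) * (ψ (c * (u * v) * (ϖ ^ m)⁻¹) *
          ψ (c * (u + v) * (ϖ ^ m)⁻¹ - (2 : F)⁻¹ * c * (u + v) ^ 2 * (ϖ ^ m)⁻¹)) := by
          rw [hχs]; ring
      _ = χ ((1 : F) + u) * χ ((1 : F) + v) *
          ψ ((c * u * (ϖ ^ m)⁻¹ - (2 : F)⁻¹ * c * u ^ 2 * (ϖ ^ m)⁻¹) +
            (c * v * (ϖ ^ m)⁻¹ - (2 : F)⁻¹ * c * v ^ 2 * (ϖ ^ m)⁻¹)) := by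
          rw [← ψ.map_add_eq_mul]
          have harg : c * (u * v) * (ϖ ^ m)⁻¹ +
              (c * (u + v) * (ϖ ^ m)⁻¹ - (2 : F)⁻¹ * c * (u + v) ^ 2 * (ϖ ^ m)⁻¹)
              = (c * u * (ϖ ^ m)⁻¹ - (2 : F)⁻¹ * c * u ^ 2 * (ϖ ^ m)⁻¹) +
                (c * v * (ϖ ^ m)⁻¹ - (2 : F)⁻¹ * c * v ^ 2 * (ϖ ^ m)⁻¹) := by
            linear_combination (-(c * (u * v) * (ϖ ^ m)⁻¹)) * h21
          rw [harg]
      _ = η u * η v := by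
          rw [ψ.map_add_eq_mul]
          simp only [hηdef]
          ring
  -- quotient ring setup
  set I : Ideal O := Ideal.span {(⟨ϖ, hϖO⟩ : O)} with hI
  haveI hfinI : Finite (O ⧸ I) := hfin
  have hmemI : ∀ x : O, x ∈ I ↔ (x : F) * ϖ⁻¹ ∈ O := by
    intro x
    rw [hI, Ideal.mem_span_singleton]
    constructor
    · rintro ⟨y, hy⟩
      have hxF : (x : F) = ϖ * (y : F) := by rw [hy]; rfl
      have h : (x : F) * ϖ⁻¹ = (y : F) := by rw [hxF]; field_simp
      rw [h]; exact y.2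
    · intro hx
      refine ⟨⟨(x : F) * ϖ⁻¹, hx⟩, ?_⟩
      apply Subtype.ext
      show (x : F) = ϖ * ((x : F) * ϖ⁻¹)
      field_simp
  have hmksurj : Function.Surjective (Ideal.Quotient.mk I) := Ideal.Quotient.mk_surjective
  set sec : O ⧸ I → O := Function.surjInv hmksurj with hsecdef
  have hsec : ∀ r, Ideal.Quotient.mk I (sec r) = r := fun r => Function.surjInv_eq hmksurj r
  have hsecI : ∀ a : O, sec (Ideal.Quotient.mk I a) - a ∈ I :=
    fun a => (Ideal.Quotient.eq).mp (hsec (Ideal.Quotient.mk I a))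
  have hsec_add : ∀ r s : O ⧸ I, sec (r + s) - (sec r + sec s) ∈ I := by
    intro r s
    rw [← Ideal.Quotient.eq, (Ideal.Quotient.mk I).map_add, hsec, hsec, hsec]
  have hsec_zero : sec 0 - 0 ∈ I := by
    rw [← Ideal.Quotient.eq, (Ideal.Quotient.mk I).map_zero, hsec]
  -- the function e₀ and the character E
  have haO : ∀ a : O, ((a : F) * ϖ ^ k) * (ϖ ^ k)⁻¹ ∈ O := by
    intro a
    have h : ((a : F) * ϖ ^ k) * (ϖ ^ k)⁻¹ = (a : F) := by field_simp
    rw [h]; exact a.2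
  set e₀ : O → ℂ := fun a => η ((a : F) * ϖ ^ k) with he₀def
  have he₀add : ∀ a b : O, e₀ (a + b) = e₀ a * e₀ b := by
    intro a b
    have h : ((a + b : O) : F) * ϖ ^ k = (a : F) * ϖ ^ k + (b : F) * ϖ ^ k := by
      push_cast; ring
    simp only [he₀def]
    rw [h]
    exact hA _ _ (haO a) (haO b)
  have he₀I : ∀ a b : O, a - b ∈ I → e₀ a = e₀ b := by
    intro a b hab
    have h1 : e₀ a = e₀ (b + (a - b)) := by congr 1; ring
    rw [h1, he₀add]
    have h2 : e₀ (a - b) = 1 := by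
      simp only [he₀def]
      apply hηB
      have h3 : (((a - b : O) : F) * ϖ ^ k) * (ϖ ^ (k + 1))⁻¹ = ((a - b : O) : F) * ϖ⁻¹ := by
        rw [pow_succ]; field_simp
      rw [h3]
      exact (hmemI _).mp hab
    rw [h2, mul_one]
  have he₀zero : e₀ 0 = 1 := by
    simp only [he₀def]
    apply hηB
    have h : (((0 : O) : F) * ϖ ^ k) * (ϖ ^ (k + 1))⁻¹ = 0 := by push_cast; ring
    rw [h]; exact O.zero_mem
  let E : AddChar (O ⧸ I) ℂ :=
    { toFun := fun r => e₀ (sec r)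
      map_zero_eq_one' := by
        show e₀ (sec 0) = 1
        rw [he₀I (sec 0) 0 hsec_zero, he₀zero]
      map_add_eq_mul' := fun r s => by
        show e₀ (sec (r + s)) = e₀ (sec r) * e₀ (sec s)
        rw [he₀I (sec (r + s)) (sec r + sec s) (hsec_add r s), he₀add] }
  have hE : ∀ a : O, E (Ideal.Quotient.mk I a) = e₀ a := by
    intro a
    show e₀ (sec (Ideal.Quotient.mk I a)) = e₀ a
    exact he₀I _ _ (hsecI a)
  -- the pairing characters
  have hpr0 : ∀ (d : F), d ∈ O → ∀ (a b : O), a - b ∈ I →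
      ψ (c * d * (a : F) * ϖ⁻¹) = ψ (c * d * (b : F) * ϖ⁻¹) := by
    intro d hd a b hab
    apply hψcong
    have h : c * d * (a : F) * ϖ⁻¹ - c * d * (b : F) * ϖ⁻¹
        = (c * d) * (((a - b : O) : F) * ϖ⁻¹) := by push_cast; ring
    rw [h]
    exact O.mul_mem (O.mul_mem hcO hd) ((hmemI _).mp hab)
  let B : O ⧸ I → AddChar (O ⧸ I) ℂ := fun r =>
    { toFun := fun s => ψ (c * ((sec r : O) : F) * ((sec s : O) : F) * ϖ⁻¹)
      map_zero_eq_one' := by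
        show ψ (c * ((sec r : O) : F) * ((sec 0 : O) : F) * ϖ⁻¹) = 1
        rw [hpr0 _ (sec r).2 (sec 0) 0 hsec_zero]
        have h : c * ((sec r : O) : F) * ((0 : O) : F) * ϖ⁻¹ = 0 := by push_cast; ring
        rw [h, ψ.map_zero_eq_one]
      map_add_eq_mul' := fun s t => by
        show ψ (c * ((sec r : O) : F) * ((sec (s + t) : O) : F) * ϖ⁻¹)
          = ψ (c * ((sec r : O) : F) * ((sec s : O) : F) * ϖ⁻¹) *
            ψ (c * ((sec r : O) : F) * ((sec t : O) : F) * ϖ⁻¹)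
        rw [hpr0 _ (sec r).2 (sec (s + t)) (sec s + sec t) (hsec_add s t)]
        rw [← ψ.map_add_eq_mul]
        have harg : c * ((sec r : O) : F) * (((sec s + sec t : O)) : F) * ϖ⁻¹
            = c * ((sec r : O) : F) * ((sec s : O) : F) * ϖ⁻¹ +
              c * ((sec r : O) : F) * ((sec t : O) : F) * ϖ⁻¹ := by
          push_cast
          ring
        rw [harg] }
  have hBev : ∀ (r : O ⧸ I) (a : O), B r (Ideal.Quotient.mk I a)
      = ψ (c * ((sec r : O) : F) * (a : F) * ϖ⁻¹) := by
    intro r a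
    show ψ (c * ((sec r : O) : F) * ((sec (Ideal.Quotient.mk I a) : O) : F) * ϖ⁻¹)
      = ψ (c * ((sec r : O) : F) * (a : F) * ϖ⁻¹)
    exact hpr0 _ (sec r).2 _ a (hsecI a)
  -- key nondegeneracy
  have hkey : ∀ d : F, d ∈ O → (∀ a : F, a ∈ O → ψ (c * d * a * ϖ⁻¹) = 1) →
      d * ϖ⁻¹ ∈ O := by
    intro d hd hall
    by_contra hnd
    have hdinv : d⁻¹ ∈ O := hunit d hd hnd
    have hd0 : d ≠ 0 := by
      intro h
      apply hnd
      rw [h, zero_mul]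
      exact O.zero_mem
    obtain ⟨x₀, hx₀O, hx₀⟩ := hψnt
    have haO' : c⁻¹ * d⁻¹ * (ϖ * x₀) ∈ O := O.mul_mem (O.mul_mem hcu hdinv) hx₀O
    have h1 := hall _ haO'
    have harg : c * d * (c⁻¹ * d⁻¹ * (ϖ * x₀)) * ϖ⁻¹ = x₀ := by field_simp
    rw [harg] at h1
    exact hx₀ h1
  -- B is injective
  have hBinj : Function.Injective B := by
    intro r s hrs
    have hall : ∀ a : F, a ∈ O →
        ψ (c * (((sec r : O) : F) - ((sec s : O) : F)) * a * ϖ⁻¹) = 1 := by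
      intro a ha
      have h1 : B r (Ideal.Quotient.mk I ⟨a, ha⟩) = B s (Ideal.Quotient.mk I ⟨a, ha⟩) := by
        rw [hrs]
      rw [hBev, hBev] at h1
      have h2 := hψsub _ _ h1
      have h3 : c * ((sec r : O) : F) * ((⟨a, ha⟩ : O) : F) * ϖ⁻¹
          - c * ((sec s : O) : F) * ((⟨a, ha⟩ : O) : F) * ϖ⁻¹
          = c * (((sec r : O) : F) - ((sec s : O) : F)) * a * ϖ⁻¹ := by ring
      rwa [h3] at h2
    have hdO : ((sec r : O) : F) - ((sec s : O) : F) ∈ O := O.sub_mem (sec r).2 (sec s).2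
    have hdP := hkey _ hdO hall
    have hmem : sec r - sec s ∈ I := by
      rw [hmemI]
      push_cast
      exact hdP
    have := (Ideal.Quotient.eq).mpr hmem
    rwa [hsec, hsec] at this
  -- B is surjective by counting
  cases nonempty_fintype (O ⧸ I)
  have hBsurj : Function.Surjective B :=
    ((Fintype.bijective_iff_injective_and_card B).mpr
      ⟨hBinj, (AddChar.card_eq).symm⟩).2
  obtain ⟨b₀, hb₀⟩ := hBsurj E
  have hbmain : ∀ x : F, (x - 1) * (ϖ ^ k)⁻¹ ∈ O →
      χ x = ψ ((2 : F)⁻¹ * c * ((x - 1) ^ 2 - 2 * (x - 1)) * (ϖ ^ m)⁻¹) *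
        ψ (c * ((sec b₀ : O) : F) * (x - 1) * (ϖ ^ (k + 1))⁻¹) := by
    intro x hx
    have hxa : x - 1 = ((x - 1) * (ϖ ^ k)⁻¹) * ϖ ^ k := by field_simp
    have hZ : η (x - 1) = ψ (c * ((sec b₀ : O) : F) * (x - 1) * (ϖ ^ (k + 1))⁻¹) := by
      have h1 : η (x - 1) = e₀ ⟨(x - 1) * (ϖ ^ k)⁻¹, hx⟩ := by
        show η (x - 1) = η ((((⟨(x - 1) * (ϖ ^ k)⁻¹, hx⟩ : O)) : F) * ϖ ^ k)
        rw [← hxa]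
      have h2 : e₀ ⟨(x - 1) * (ϖ ^ k)⁻¹, hx⟩
          = E (Ideal.Quotient.mk I ⟨(x - 1) * (ϖ ^ k)⁻¹, hx⟩) := (hE _).symm
      have h3 : E (Ideal.Quotient.mk I ⟨(x - 1) * (ϖ ^ k)⁻¹, hx⟩)
          = B b₀ (Ideal.Quotient.mk I ⟨(x - 1) * (ϖ ^ k)⁻¹, hx⟩) := by rw [hb₀]
      have h4 := hBev b₀ ⟨(x - 1) * (ϖ ^ k)⁻¹, hx⟩
      have h5 : ψ (c * ((sec b₀ : O) : F) * (((⟨(x - 1) * (ϖ ^ k)⁻¹, hx⟩ : O)) : F) * ϖ⁻¹)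
          = ψ (c * ((sec b₀ : O) : F) * (x - 1) * (ϖ ^ (k + 1))⁻¹) := by
        have harg : c * ((sec b₀ : O) : F) * (((⟨(x - 1) * (ϖ ^ k)⁻¹, hx⟩ : O)) : F) * ϖ⁻¹
            = c * ((sec b₀ : O) : F) * (x - 1) * (ϖ ^ (k + 1))⁻¹ := by
          show c * ((sec b₀ : O) : F) * ((x - 1) * (ϖ ^ k)⁻¹) * ϖ⁻¹
            = c * ((sec b₀ : O) : F) * (x - 1) * (ϖ ^ (k + 1))⁻¹
          rw [pow_succ]
          field_simp
        rw [harg]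
      rw [h1, h2, h3, h4, h5]
    simp only [hηdef] at hZ
    have h1x : (1 : F) + (x - 1) = x := by ring
    rw [h1x] at hZ
    have hT : ψ ((2 : F)⁻¹ * c * ((x - 1) ^ 2 - 2 * (x - 1)) * (ϖ ^ m)⁻¹)
        = (ψ (c * (x - 1) * (ϖ ^ m)⁻¹ - (2 : F)⁻¹ * c * (x - 1) ^ 2 * (ϖ ^ m)⁻¹))⁻¹ := by
      rw [← ψ.map_neg_eq_inv]
      have harg : (2 : F)⁻¹ * c * ((x - 1) ^ 2 - 2 * (x - 1)) * (ϖ ^ m)⁻¹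
          = -(c * (x - 1) * (ϖ ^ m)⁻¹ - (2 : F)⁻¹ * c * (x - 1) ^ 2 * (ϖ ^ m)⁻¹) := by
        linear_combination (-(c * (x - 1) * (ϖ ^ m)⁻¹)) * h21
      rw [harg]
    rw [hT, ← hZ]
    rw [eq_inv_mul_iff_mul_eq₀ (hψne _)]
    ring
  refine ⟨((sec b₀ : O) : F), (sec b₀).2, hbmain, ?_⟩
  intro b' hb' hform
  apply hkey _ (O.sub_mem (sec b₀).2 hb')
  intro a ha
  have hx : ((1 + a * ϖ ^ k : F) - 1) * (ϖ ^ k)⁻¹ ∈ O := by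
    have h : ((1 + a * ϖ ^ k : F) - 1) * (ϖ ^ k)⁻¹ = a := by field_simp; ring
    rw [h]; exact ha
  have h1 := hbmain (1 + a * ϖ ^ k) hx
  have h2 := hform (1 + a * ϖ ^ k) hx
  have h3 : ψ (c * ((sec b₀ : O) : F) * ((1 + a * ϖ ^ k : F) - 1) * (ϖ ^ (k + 1))⁻¹)
      = ψ (c * b' * ((1 + a * ϖ ^ k : F) - 1) * (ϖ ^ (k + 1))⁻¹) :=
    mul_left_cancel₀ (hψne _) (h1.symm.trans h2)
  have h4 := hψsub _ _ h3
  have h5 : c * ((sec b₀ : O) : F) * ((1 + a * ϖ ^ k : F) - 1) * (ϖ ^ (k + 1))⁻¹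
      - c * b' * ((1 + a * ϖ ^ k : F) - 1) * (ϖ ^ (k + 1))⁻¹
      = c * (((sec b₀ : O) : F) - b') * a * ϖ⁻¹ := by
    rw [pow_succ]; field_simp; ring
  rwa [h5] at h4
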